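/- Let a < b be fixed reals, B, C > 0, and let Q_ν : ℂ → ℝ (ν ≥ 0) and 𝓕 : ℂ → ℝ be nonnegative continuous functions on the strip a ≤ Im(s) ≤ b satisfying: (i) 𝓕(s) ≪ 1 for Re(s) ≥ 1; (ii) 𝓕(s) ≪ B^{|σ|} |σ|^{2|σ|+1} for σ = Re(s) ≤ 1; (iii) Q_ν(s) ≪ (C(|s|+1))^{2ν}/ν! for 0 ≤ ν ≤ min(|s|, |σ|+2); (iv) Q_ν(s) ≪ (C(|σ|+2))^{|σ|+2} for ν ≤ |σ|+2 and |s| ≤ 2⌊|σ|⌋+2. Then for σ ≤ −1 and a ≤ Im(s) ≤ b: Σ_{0 ≤ ν ≤ |σ|+2} Q_ν(s) 𝓕(s+ν) ≪ B^{|σ|} |σ|^{2|σ|+1}, with implied constant depending only on 𝓕, a, b, B, C and the implied constants in (i)–(iv). -/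

import Mathlib

open Complex

set_option maxHeartbeats 2000000 in
/-- Lemma 5 of the paper. Under growth conditions (i)–(iv) on the
nonnegative continuous functions `Q ν` and `F` in the horizontal strip `a ≤ Im s ≤ b`,
one has `∑_{0 ≤ ν ≤ |σ|+2} Q ν (s) F(s+ν) ≪ B^{|σ|} |σ|^{2|σ|+1}` for `σ = Re s ≤ -1`. -/
theorem convolution_growth_estimate
    (a b B C K₁ K₂ K₃ K₄ : ℝ) (hab : a < b) (hB : 0 < B) (hC : 0 < C)
    (Q : ℕ → ℂ → ℝ) (F : ℂ → ℝ)
    (hFnonneg : ∀ s : ℂ, 0 ≤ F s) (hQnonneg : ∀ (ν : ℕ) (s : ℂ), 0 ≤ Q ν s)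
    (hFcont : ContinuousOn F {s : ℂ | a ≤ s.im ∧ s.im ≤ b})
    (hQcont : ∀ ν : ℕ, ContinuousOn (Q ν) {s : ℂ | a ≤ s.im ∧ s.im ≤ b})
    (hF1 : ∀ s : ℂ, a ≤ s.im → s.im ≤ b → 1 ≤ s.re → F s ≤ K₁)
    (hF2 : ∀ s : ℂ, a ≤ s.im → s.im ≤ b → s.re ≤ 1 →
      F s ≤ K₂ * B ^ |s.re| * |s.re| ^ (2 * |s.re| + 1))
    (hQ1 : ∀ (s : ℂ) (ν : ℕ), a ≤ s.im → s.im ≤ b →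
      (ν : ℝ) ≤ min (‖s‖) (|s.re| + 2) →
      Q ν s ≤ K₃ * (C * (‖s‖ + 1)) ^ (2 * ν) / (Nat.factorial ν : ℝ))
    (hQ2 : ∀ (s : ℂ) (ν : ℕ), a ≤ s.im → s.im ≤ b → (ν : ℝ) ≤ |s.re| + 2 →
      ‖s‖ ≤ 2 * (⌊|s.re|⌋ : ℝ) + 2 →
      Q ν s ≤ K₄ * (C * (|s.re| + 2)) ^ (|s.re| + 2)) :
    ∃ K : ℝ, ∀ s : ℂ, s.re ≤ -1 → a ≤ s.im → s.im ≤ b →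
      (∑ ν ∈ Finset.range ((⌊|s.re|⌋).toNat + 3), Q ν s * F (s + (ν : ℂ))) ≤
        K * B ^ |s.re| * |s.re| ^ (2 * |s.re| + 1) := by
  set M : ℝ := max |a| |b| with hMdef
  have hM0 : (0:ℝ) ≤ M := le_trans (abs_nonneg a) (le_max_left _ _)
  set K₁' : ℝ := max K₁ 0 with hK₁def
  set K₂' : ℝ := max K₂ 0 with hK₂def
  set K₃' : ℝ := max K₃ 0 with hK₃def
  set K₄' : ℝ := max K₄ 0 with hK₄def
  have hK₁' : 0 ≤ K₁' := le_max_right _ _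
  have hK₂' : 0 ≤ K₂' := le_max_right _ _
  have hK₃' : 0 ≤ K₃' := le_max_right _ _
  have hK₄' : 0 ≤ K₄' := le_max_right _ _
  set E : ℝ := C ^ 2 * (M + 2) ^ 2 / B with hEdef
  have hE0 : 0 ≤ E := by positivity
  set x : ℝ := max (max E 1) (9 * C * Real.exp 1 / B) with hxdef
  have hx1 : (1:ℝ) ≤ x := le_trans (le_max_right E 1) (le_max_left _ _)
  have hx0 : (0:ℝ) ≤ x := by linarith
  have hxE : E ≤ x := le_trans (le_max_left E 1) (le_max_left _ _)
  have hxC : 9 * C * Real.exp 1 / B ≤ x := le_max_right _ _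
  set Fb : ℝ := max K₁' (K₂' * max 1 B) with hFbdef
  have hFb0 : 0 ≤ Fb := le_trans hK₁' (le_max_left _ _)
  set dM : ℝ := (max 1 (C * (2 * M + 1))) ^ (2 * ((⌊M⌋).toNat + 2)) with hdMdef
  have hdM1 : (1:ℝ) ≤ dM := one_le_pow₀ (le_max_left _ _)
  have hdM0 : 0 ≤ dM := by linarith
  have hminB : (0:ℝ) < min 1 B := lt_min one_pos hB
  have hminBM : (0:ℝ) < (min 1 B) ^ M := Real.rpow_pos_of_pos hminB M
  set cI : ℝ := K₂' * K₃' with hcIdef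
  set cIIa : ℝ := Fb * K₄' * 6 * (9 * C) ^ 2 with hcIIadef
  set cIIb : ℝ := K₃' * Fb * dM / (min 1 B) ^ M with hcIIbdef
  have hcI0 : 0 ≤ cI := mul_nonneg hK₂' hK₃'
  have hcIIa0 : 0 ≤ cIIa := by positivity
  have hcIIb0 : 0 ≤ cIIb := by positivity
  set K₀ : ℝ := cI + cIIa + cIIb with hK₀def
  have hK₀0 : 0 ≤ K₀ := by linarith
  have haM : |a| ≤ M := le_max_left _ _
  have hbM : |b| ≤ M := le_max_right _ _
  have hK₁le : K₁ ≤ K₁' := le_max_left _ _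
  have hK₂le : K₂ ≤ K₂' := le_max_left _ _
  have hK₃le : K₃ ≤ K₃' := le_max_left _ _
  have hK₄le : K₄ ≤ K₄' := le_max_left _ _
  have hK1Fb : K₁' ≤ Fb := le_max_left _ _
  have hK2Fb : K₂' * max 1 B ≤ Fb := le_max_right _ _
  have h1B : (1:ℝ) ≤ max 1 B := le_max_left _ _
  have hB1B : B ≤ max 1 B := le_max_right _ _
  have hminB1 : min 1 B ≤ 1 := min_le_left _ _
  have hminBB : min 1 B ≤ B := min_le_right _ _
  clear_value M K₁' K₂' K₃' K₄' E x Fb dM cI cIIa cIIb K₀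
  refine ⟨K₀ * Real.exp x, ?_⟩
  intro s hs ha hb
  set m : ℝ := |s.re| with hmdef
  have hm1 : (1:ℝ) ≤ m := by
    rw [hmdef, abs_of_nonpos (by linarith)]; linarith
  have hm0 : (0:ℝ) < m := by linarith
  have hsre : s.re = -m := by
    rw [hmdef, abs_of_nonpos (by linarith)]; ring
  set n : ℕ := (⌊m⌋).toNat with hndef
  have hfl0 : (0:ℤ) ≤ ⌊m⌋ := Int.le_floor.mpr (by exact_mod_cast hm0.le)
  have hncast : ((n:ℤ):ℝ) = ((⌊m⌋ : ℤ) : ℝ) := by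
    rw [hndef, Int.toNat_of_nonneg hfl0]
  have hnm : (n:ℝ) ≤ m := by
    have := Int.floor_le m
    rw [show ((n:ℕ):ℝ) = ((⌊m⌋ : ℤ) : ℝ) from by exact_mod_cast hncast]
    exact this
  have hmn1 : m < (n:ℝ) + 1 := by
    have := Int.lt_floor_add_one m
    rw [show ((n:ℕ):ℝ) = ((⌊m⌋ : ℤ) : ℝ) from by exact_mod_cast hncast]
    exact this
  have him : |s.im| ≤ M := by
    rw [abs_le]
    constructor
    · have : -M ≤ -|a| := by simp [hMdef]
      have ha' : -|a| ≤ a := neg_abs_le a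
      linarith
    · exact le_trans hb (le_trans (le_abs_self b) hbM)
  clear_value m n
  have hA1 : m ≤ ‖s‖ := hmdef ▸ Complex.abs_re_le_norm s
  have hA2 : ‖s‖ ≤ m + M := by
    refine le_trans (Complex.norm_le_abs_re_add_abs_im s) ?_
    rw [← hmdef]; linarith
  have hA0 : (0:ℝ) ≤ ‖s‖ := norm_nonneg s
  -- the per-term bound
  have key : ∀ ν ∈ Finset.range (n + 3),
      Q ν s * F (s + (ν : ℂ)) ≤
        K₀ * (x ^ ν / (Nat.factorial ν : ℝ)) * (B ^ m * m ^ (2 * m + 1)) := by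
    intro ν hν
    have hνn : ν ≤ n + 2 := by
      have := Finset.mem_range.mp hν; omega
    have hν2 : (ν:ℝ) ≤ (n:ℝ) + 2 := by exact_mod_cast hνn
    have hνm2 : (ν:ℝ) ≤ m + 2 := by linarith
    have himν : (s + (ν:ℂ)).im = s.im := by simp
    have hreν : (s + (ν:ℂ)).re = -m + ν := by simp [hsre]
    have hfact_pos : (0:ℝ) < (Nat.factorial ν : ℝ) := by
      exact_mod_cast Nat.factorial_pos ν
    have hbase : (0:ℝ) ≤ B ^ m * m ^ (2 * m + 1) := by positivity
    have hterm0 : (0:ℝ) ≤ x ^ ν / (Nat.factorial ν : ℝ) := by positivity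
    rcases le_or_gt (ν:ℝ) m with hcase | hcase
    · -- Case I : ν ≤ m
      have hQb : Q ν s ≤ K₃' * (C * (‖s‖ + 1)) ^ (2 * ν) / (Nat.factorial ν : ℝ) := by
        refine le_trans (hQ1 s ν ha hb (le_min (hcase.trans hA1) (by linarith))) ?_
        gcongr <;> first | exact hK₃le | positivity
      have hFre : (s + (ν:ℂ)).re ≤ 1 := by rw [hreν]; linarith
      have habsre : |(s + (ν:ℂ)).re| = m - ν := by
        rw [hreν, _root_.abs_of_nonpos (by linarith)]; ring
      have hFb2 : F (s + (ν:ℂ)) ≤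
          K₂' * B ^ (m - ν) * (m - ν) ^ (2 * (m - ν) + 1) := by
        have := hF2 (s + (ν:ℂ)) (by rwa [himν]) (by rwa [himν]) hFre
        rw [habsre] at this
        refine le_trans this ?_
        have hX : (0:ℝ) ≤ B ^ (m - ν) := Real.rpow_nonneg hB.le _
        have hY : (0:ℝ) ≤ (m - ν) ^ (2 * (m - ν) + 1) := Real.rpow_nonneg (by linarith) _
        exact mul_le_mul_of_nonneg_right
          (mul_le_mul_of_nonneg_right hK₂le hX) hY
      have hQnn : (0:ℝ) ≤ K₃' * (C * (‖s‖ + 1)) ^ (2 * ν) / (Nat.factorial ν : ℝ) := by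
        positivity
      have step1 : Q ν s * F (s + (ν:ℂ)) ≤
          (K₃' * (C * (‖s‖ + 1)) ^ (2 * ν) / (Nat.factorial ν : ℝ)) *
            (K₂' * B ^ (m - ν) * (m - ν) ^ (2 * (m - ν) + 1)) :=
        mul_le_mul hQb hFb2 (hFnonneg _) hQnn
      refine le_trans step1 ?_
      -- key inequalities
      have hCA : (C * (‖s‖ + 1)) ^ (2 * ν) ≤ (x * B * m ^ 2) ^ ν := by
        have hb1 : C * (‖s‖ + 1) ≤ C * (M + 2) * m := by
          have hMm : M * 1 ≤ M * m := mul_le_mul_of_nonneg_left hm1 hM0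
          have hexpand : (M + 2) * m = M * m + 2 * m := by ring
          have : ‖s‖ + 1 ≤ (M + 2) * m := by linarith
          calc C * (‖s‖ + 1) ≤ C * ((M + 2) * m) := by
                exact mul_le_mul_of_nonneg_left this hC.le
            _ = C * (M + 2) * m := by ring
        have hsq : (C * (‖s‖ + 1)) ^ (2 * ν) = ((C * (‖s‖ + 1)) ^ 2) ^ ν := by
          rw [← pow_mul]
        rw [hsq]
        refine pow_le_pow_left₀ (by positivity) ?_ ν
        have h1 : (C * (‖s‖ + 1)) ^ 2 ≤ (C * (M + 2) * m) ^ 2 :=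
          pow_le_pow_left₀ (by positivity) hb1 2
        have h2 : (C * (M + 2) * m) ^ 2 = E * B * m ^ 2 := by
          rw [hEdef]; field_simp
        have h3 : E * B * m ^ 2 ≤ x * B * m ^ 2 :=
          mul_le_mul_of_nonneg_right (mul_le_mul_of_nonneg_right hxE hB.le) (sq_nonneg m)
        linarith
      have hmsub : (m - ν) ^ (2 * (m - ν) + 1) ≤ m ^ (2 * (m - ν) + 1) :=
        Real.rpow_le_rpow (by linarith) (by linarith) (by linarith)
      have hBsplit : B ^ m = B ^ (m - ν) * B ^ ν := by
        rw [← Real.rpow_natCast B ν, ← Real.rpow_add hB]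
        ring_nf
      have hmsplit : m ^ (2 * m + 1) = m ^ (2 * (m - ν) + 1) * (m ^ 2) ^ ν := by
        rw [← Real.rpow_natCast (m ^ 2) ν, ← Real.rpow_natCast m 2,
          ← Real.rpow_mul hm0.le, ← Real.rpow_add hm0]
        ring_nf
      have step2 : (K₃' * (C * (‖s‖ + 1)) ^ (2 * ν) / (Nat.factorial ν : ℝ)) *
            (K₂' * B ^ (m - ν) * (m - ν) ^ (2 * (m - ν) + 1)) ≤
          (K₃' * (x * B * m ^ 2) ^ ν / (Nat.factorial ν : ℝ)) *
            (K₂' * B ^ (m - ν) * m ^ (2 * (m - ν) + 1)) := by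
        have hBν : (0:ℝ) ≤ B ^ (m - ν) := Real.rpow_nonneg hB.le _
        have s2a : K₃' * (C * (‖s‖ + 1)) ^ (2 * ν) / (Nat.factorial ν : ℝ) ≤
            K₃' * (x * B * m ^ 2) ^ ν / (Nat.factorial ν : ℝ) :=
          (div_le_div_iff_of_pos_right hfact_pos).mpr (mul_le_mul_of_nonneg_left hCA hK₃')
        have s2b : K₂' * B ^ (m - ν) * (m - ν) ^ (2 * (m - ν) + 1) ≤
            K₂' * B ^ (m - ν) * m ^ (2 * (m - ν) + 1) :=
          mul_le_mul_of_nonneg_left hmsub (mul_nonneg hK₂' hBν)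
        exact mul_le_mul s2a s2b
          (mul_nonneg (mul_nonneg hK₂' hBν) (Real.rpow_nonneg (by linarith) _))
          (by positivity)
      refine le_trans step2 ?_
      have hfinal : (K₃' * (x * B * m ^ 2) ^ ν / (Nat.factorial ν : ℝ)) *
            (K₂' * B ^ (m - ν) * m ^ (2 * (m - ν) + 1)) =
          cI * (x ^ ν / (Nat.factorial ν : ℝ)) * (B ^ m * m ^ (2 * m + 1)) := by
        rw [hBsplit, hmsplit, hcIdef, mul_pow, mul_pow]
        field_simp
      rw [hfinal]
      gcongr
      rw [hK₀def]; linarith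
    · -- Case II : m < ν
      have hrepos : (0:ℝ) < -m + ν := by linarith
      have hre2 : (s + (ν:ℂ)).re ≤ 2 := by rw [hreν]; linarith
      -- F bound
      have hFB : F (s + (ν:ℂ)) ≤ Fb := by
        rcases le_or_gt 1 ((s + (ν:ℂ)).re) with h1 | h1
        · refine le_trans (hF1 _ (by rwa [himν]) (by rwa [himν]) h1) ?_
          exact le_trans hK₁le hK1Fb
        · have hFb2 := hF2 (s + (ν:ℂ)) (by rwa [himν]) (by rwa [himν]) h1.le
          have habsre : |(s + (ν:ℂ)).re| = -m + ν := by
            rw [hreν, _root_.abs_of_nonneg hrepos.le]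
          rw [habsre] at hFb2
          set t : ℝ := -m + ν with htdef
          have ht0 : 0 ≤ t := hrepos.le
          have ht1 : t ≤ 1 := by
            have : (s + (ν:ℂ)).re = t := by rw [hreν]
            linarith [this ▸ h1.le]
          have hBt : B ^ t ≤ max 1 B := by
            rcases le_total B 1 with hB1 | hB1
            · exact le_trans (Real.rpow_le_one hB.le hB1 ht0) (le_max_left _ _)
            · refine le_trans ?_ (le_max_right 1 B)
              calc B ^ t ≤ B ^ (1:ℝ) := Real.rpow_le_rpow_of_exponent_le hB1 ht1
                _ = B := Real.rpow_one B
          have htt : t ^ (2 * t + 1) ≤ 1 := Real.rpow_le_one ht0 ht1 (by linarith)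
          calc F (s + (ν:ℂ)) ≤ K₂ * B ^ t * t ^ (2 * t + 1) := hFb2
            _ ≤ K₂' * B ^ t * t ^ (2 * t + 1) := by
                refine mul_le_mul_of_nonneg_right
                  (mul_le_mul_of_nonneg_right hK₂le (Real.rpow_nonneg hB.le _))
                  (Real.rpow_nonneg ht0 _)
            _ ≤ K₂' * max 1 B * 1 := by
                refine mul_le_mul (mul_le_mul_of_nonneg_left hBt hK₂') htt
                  (Real.rpow_nonneg ht0 _) (by positivity)
            _ = K₂' * max 1 B := by ring
            _ ≤ Fb := hK2Fb
      rcases le_or_gt (‖s‖) (2 * ((⌊m⌋ : ℤ) : ℝ) + 2) with hsmall | hbig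
      · -- Case IIa
        have hQb : Q ν s ≤ K₄' * (C * (m + 2)) ^ (m + 2) := by
          have := hQ2 s ν ha hb (by rw [← hmdef]; exact hνm2) (by rw [← hmdef]; exact hsmall)
          rw [← hmdef] at this
          refine le_trans this ?_
          gcongr <;> first | exact hK₄le | positivity
        have step1 : Q ν s * F (s + (ν:ℂ)) ≤ (K₄' * (C * (m + 2)) ^ (m + 2)) * Fb :=
          mul_le_mul hQb hFB (hFnonneg _) (by positivity)
        refine le_trans step1 ?_
        -- factorial bound : ν ! ≤ (m+2)^(m+2)
        have hfactle : ((Nat.factorial ν : ℕ) : ℝ) ≤ (m + 2) ^ (m + 2) := by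
          have h1 : Nat.factorial ν ≤ Nat.factorial (n + 2) := Nat.factorial_le hνn
          have h2 : Nat.factorial (n + 2) ≤ (n + 2) ^ (n + 2) := Nat.factorial_le_pow _
          have h3 : ((Nat.factorial ν : ℕ) : ℝ) ≤ (((n:ℝ) + 2)) ^ ((n:ℕ) + 2) := by
            have h31 : ((Nat.factorial ν : ℕ) : ℝ) ≤ (((n + 2) ^ (n + 2) : ℕ) : ℝ) := by
              exact_mod_cast le_trans h1 h2
            refine le_trans h31 (le_of_eq ?_)
            push_cast
            ring
          refine le_trans h3 ?_
          rw [← Real.rpow_natCast ((n:ℝ) + 2) (n + 2)]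
          have h4 : ((n:ℝ) + 2) ^ (((n:ℕ) + 2 : ℕ) : ℝ) ≤ (m + 2) ^ (((n:ℕ) + 2 : ℕ) : ℝ) :=
            Real.rpow_le_rpow (by positivity) (by linarith) (by positivity)
          refine le_trans h4 ?_
          refine Real.rpow_le_rpow_of_exponent_le (by linarith) ?_
          push_cast; linarith
        have hxν : x ^ m ≤ x ^ ν := by
          rw [← Real.rpow_natCast x ν]
          exact Real.rpow_le_rpow_of_exponent_le hx1 hcase.le
        -- core inequality
        have hcore : (C * (m + 2)) ^ (m + 2) * (m + 2) ^ (m + 2) ≤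
            (9 * C) ^ 2 * 6 * (x ^ m * (B ^ m * m ^ (2 * m + 1))) := by
          have e1 : (C * (m + 2)) ^ (m + 2) * (m + 2) ^ (m + 2) =
              (C * (m + 2) * (m + 2)) ^ (m + 2) := by
            rw [← Real.mul_rpow (by positivity) (by positivity)]
          have e2 : (C * (m + 2) * (m + 2)) ^ (m + 2) ≤ (9 * C * m ^ 2) ^ (m + 2) := by
            refine Real.rpow_le_rpow (by positivity) ?_ (by linarith)
            have h32 : (m + 2) * (m + 2) ≤ (3 * m) * (3 * m) :=
              mul_le_mul (by linarith) (by linarith) (by linarith) (by linarith)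
            calc C * (m + 2) * (m + 2) = C * ((m + 2) * (m + 2)) := by ring
              _ ≤ C * ((3 * m) * (3 * m)) := mul_le_mul_of_nonneg_left h32 hC.le
              _ = 9 * C * m ^ 2 := by ring
          have e3 : (9 * C * m ^ 2) ^ (m + 2) =
              (9 * C) ^ (m + 2) * m ^ (2 * m + 4) := by
            rw [Real.mul_rpow (by positivity) (by positivity)]
            congr 1
            rw [← Real.rpow_natCast m 2, ← Real.rpow_mul hm0.le]
            ring_nf
          have e4 : (9 * C) ^ (m + 2) = (9 * C) ^ (2:ℝ) * (9 * C) ^ m := by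
            rw [← Real.rpow_add (by positivity)]; ring_nf
          have e5 : m ^ (2 * m + 4) = m ^ (2 * m + 1) * m ^ (3:ℝ) := by
            rw [← Real.rpow_add hm0]; ring_nf
          have e6 : (9 * C) ^ m ≤ x ^ m * B ^ m / Real.exp m := by
            have h9C : 9 * C ≤ x * B / Real.exp 1 := by
              rw [div_le_iff₀ hB] at hxC
              rw [le_div_iff₀ (Real.exp_pos 1)]
              linarith
            calc (9 * C) ^ m ≤ (x * B / Real.exp 1) ^ m :=
                  Real.rpow_le_rpow (by positivity) h9C hm0.le
              _ = x ^ m * B ^ m / Real.exp m := by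
                  rw [Real.div_rpow (by positivity) (Real.exp_pos 1).le,
                    Real.mul_rpow (by linarith) hB.le, Real.exp_one_rpow]
          have e7 : m ^ (3:ℝ) ≤ 6 * Real.exp m := by
            have h := Real.pow_div_factorial_le_exp m hm0.le 3
            have h6 : ((Nat.factorial 3 : ℕ) : ℝ) = 6 := by norm_num [Nat.factorial]
            have h3 : m ^ (3:ℝ) = m ^ (3:ℕ) := by
              rw [show (3:ℝ) = ((3:ℕ):ℝ) by norm_num, Real.rpow_natCast]
            rw [h6] at h
            rw [h3]
            linarith
          have e8 : (9 * C) ^ m * m ^ (3:ℝ) ≤ 6 * (x ^ m * B ^ m) := by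
            calc (9 * C) ^ m * m ^ (3:ℝ) ≤
                (x ^ m * B ^ m / Real.exp m) * (6 * Real.exp m) := by
                  refine mul_le_mul e6 e7 (Real.rpow_nonneg hm0.le _) (by positivity)
              _ = 6 * (x ^ m * B ^ m) := by
                  field_simp
          have e9 : (9 * C) ^ (2:ℝ) = (9 * C) ^ (2:ℕ) := by
            rw [show (2:ℝ) = ((2:ℕ):ℝ) by norm_num, Real.rpow_natCast]
          calc (C * (m + 2)) ^ (m + 2) * (m + 2) ^ (m + 2)
              = (C * (m + 2) * (m + 2)) ^ (m + 2) := e1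
            _ ≤ (9 * C * m ^ 2) ^ (m + 2) := e2
            _ = (9 * C) ^ (2:ℝ) * (9 * C) ^ m * (m ^ (2 * m + 1) * m ^ (3:ℝ)) := by
                rw [e3, e4, e5]
            _ = (9 * C) ^ (2:ℝ) * ((9 * C) ^ m * m ^ (3:ℝ)) * m ^ (2 * m + 1) := by ring
            _ ≤ (9 * C) ^ (2:ℝ) * (6 * (x ^ m * B ^ m)) * m ^ (2 * m + 1) := by
                refine mul_le_mul_of_nonneg_right
                  (mul_le_mul_of_nonneg_left e8 (Real.rpow_nonneg (by positivity) _))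
                  (Real.rpow_nonneg hm0.le _)
            _ = (9 * C) ^ 2 * 6 * (x ^ m * (B ^ m * m ^ (2 * m + 1))) := by
                rw [← e9]; ring
        have hW0 : 0 ≤ K₄' * Fb := mul_nonneg hK₄' hFb0
        calc (K₄' * (C * (m + 2)) ^ (m + 2)) * Fb
            = (K₄' * Fb) * ((C * (m + 2)) ^ (m + 2) * (Nat.factorial ν : ℝ)) /
                (Nat.factorial ν : ℝ) := by field_simp
          _ ≤ (K₄' * Fb) * ((C * (m + 2)) ^ (m + 2) * (m + 2) ^ (m + 2)) /
                (Nat.factorial ν : ℝ) :=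
              (div_le_div_iff_of_pos_right hfact_pos).mpr (mul_le_mul_of_nonneg_left
                (mul_le_mul_of_nonneg_left hfactle (Real.rpow_nonneg (by positivity) _)) hW0)
          _ ≤ (K₄' * Fb) * ((9 * C) ^ 2 * 6 * (x ^ ν * (B ^ m * m ^ (2 * m + 1)))) /
                (Nat.factorial ν : ℝ) := by
              refine (div_le_div_iff_of_pos_right hfact_pos).mpr (mul_le_mul_of_nonneg_left ?_ hW0)
              refine le_trans hcore ?_
              refine mul_le_mul_of_nonneg_left ?_ (by positivity)
              exact mul_le_mul_of_nonneg_right hxν hbase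
          _ = cIIa * (x ^ ν / (Nat.factorial ν : ℝ)) * (B ^ m * m ^ (2 * m + 1)) := by
              rw [hcIIadef]; field_simp
          _ ≤ K₀ * (x ^ ν / (Nat.factorial ν : ℝ)) * (B ^ m * m ^ (2 * m + 1)) := by
              gcongr
              rw [hK₀def]; linarith
      · -- Case IIb : |s| large forces m < M
        have h2fl : 2 * m < 2 * ((⌊m⌋ : ℤ) : ℝ) + 2 := by
          have := Int.lt_floor_add_one m
          linarith
        have hmM : m < M := by
          have : 2 * m < ‖s‖ := lt_of_le_of_lt (le_of_lt h2fl) hbig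
          linarith
        have hQb : Q ν s ≤ K₃' * (C * (‖s‖ + 1)) ^ (2 * ν) / (Nat.factorial ν : ℝ) := by
          have hνA : (ν:ℝ) ≤ ‖s‖ := by
            have h1 : (ν:ℝ) ≤ ((⌊m⌋ : ℤ) : ℝ) + 2 := by
              rw [show ((⌊m⌋ : ℤ) : ℝ) = (n:ℝ) from by exact_mod_cast hncast.symm]
              exact hν2
            have h2 : ((⌊m⌋ : ℤ) : ℝ) + 2 ≤ 2 * ((⌊m⌋ : ℤ) : ℝ) + 2 := by
              have : (0:ℝ) ≤ ((⌊m⌋ : ℤ) : ℝ) := by exact_mod_cast hfl0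
              linarith
            linarith [hbig]
          refine le_trans (hQ1 s ν ha hb (le_min hνA (by rw [← hmdef]; linarith))) ?_
          gcongr <;> first | exact hK₃le | positivity
        have step1 : Q ν s * F (s + (ν:ℂ)) ≤
            (K₃' * (C * (‖s‖ + 1)) ^ (2 * ν) / (Nat.factorial ν : ℝ)) * Fb :=
          mul_le_mul hQb hFB (hFnonneg _) (by positivity)
        refine le_trans step1 ?_
        have hCAdM : (C * (‖s‖ + 1)) ^ (2 * ν) ≤ dM := by
          have hb1 : C * (‖s‖ + 1) ≤ max 1 (C * (2 * M + 1)) := by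
            refine le_trans ?_ (le_max_right _ _)
            have : ‖s‖ + 1 ≤ 2 * M + 1 := by linarith
            exact mul_le_mul_of_nonneg_left this hC.le
          have hexp : 2 * ν ≤ 2 * ((⌊M⌋).toNat + 2) := by
            have hn_le : n ≤ (⌊M⌋).toNat := by
              rw [hndef]
              exact Int.toNat_le_toNat (Int.floor_le_floor hmM.le)
            omega
          calc (C * (‖s‖ + 1)) ^ (2 * ν) ≤
              (max 1 (C * (2 * M + 1))) ^ (2 * ν) :=
                pow_le_pow_left₀ (by positivity) hb1 _
            _ ≤ (max 1 (C * (2 * M + 1))) ^ (2 * ((⌊M⌋).toNat + 2)) :=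
                pow_le_pow_right₀ (le_max_left _ _) hexp
            _ = dM := by rw [hdMdef]
        have hBm : (min 1 B) ^ M ≤ B ^ m := by
          rcases le_total 1 B with hB1 | hB1
          · rw [min_eq_left hB1, Real.one_rpow]
            exact Real.one_le_rpow hB1 hm0.le
          · rw [min_eq_right hB1]
            exact Real.rpow_le_rpow_of_exponent_ge hB hB1 hmM.le
        have h1m : (1:ℝ) ≤ m ^ (2 * m + 1) := Real.one_le_rpow hm1 (by linarith)
        have hx1ν : (1:ℝ) ≤ x ^ ν := one_le_pow₀ hx1
        calc (K₃' * (C * (‖s‖ + 1)) ^ (2 * ν) / (Nat.factorial ν : ℝ)) * Fb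
            ≤ (K₃' * dM / (Nat.factorial ν : ℝ)) * Fb := by
              gcongr
          _ = (K₃' * Fb * dM / (min 1 B) ^ M) * (1 / (Nat.factorial ν : ℝ)) *
                ((min 1 B) ^ M * 1) := by
              field_simp
          _ ≤ cIIb * (x ^ ν / (Nat.factorial ν : ℝ)) * (B ^ m * m ^ (2 * m + 1)) := by
              rw [hcIIbdef]
              gcongr
          _ ≤ K₀ * (x ^ ν / (Nat.factorial ν : ℝ)) * (B ^ m * m ^ (2 * m + 1)) := by
              gcongr
              rw [hK₀def]; linarith
  -- sum up
  calc (∑ ν ∈ Finset.range (n + 3), Q ν s * F (s + (ν : ℂ)))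
      ≤ ∑ ν ∈ Finset.range (n + 3),
          K₀ * (x ^ ν / (Nat.factorial ν : ℝ)) * (B ^ m * m ^ (2 * m + 1)) :=
        Finset.sum_le_sum key
    _ = (∑ ν ∈ Finset.range (n + 3), x ^ ν / (Nat.factorial ν : ℝ)) *
          (K₀ * (B ^ m * m ^ (2 * m + 1))) := by
        rw [Finset.sum_mul]
        refine Finset.sum_congr rfl fun ν _ => by ring
    _ ≤ Real.exp x * (K₀ * (B ^ m * m ^ (2 * m + 1))) := by
        refine mul_le_mul_of_nonneg_right (Real.sum_le_exp_of_nonneg hx0 _) ?_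
        exact mul_nonneg hK₀0 (by positivity)
    _ = K₀ * Real.exp x * B ^ m * m ^ (2 * m + 1) := by ring
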